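/- Let k > 1, let M ⊆ Δ^k be nonempty, let q be an element of the convex hull of M, and let v ∈ ℕ with v ≥ 1. Then there exist b_1, …, b_v ∈ M such that ‖q − (1/v)∑_{i=1}^v b_i‖ ≤ 4(k+1)/v, where ‖·‖ is the Euclidean norm on ℝ^k. -/

import Mathlib

open MeasureTheory Filter Topology

noncomputable section

/-- The set of probability vectors over a finite set `Ω`, i.e. the standard simplex
inside the Euclidean space `ℝ^Ω`. -/
def probVec (Ω : Type*) [Fintype Ω] : Set (EuclideanSpace ℝ Ω) :=
  {p | (∀ x, 0 ≤ p x) ∧ ∑ x, p x = 1}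

/-- The relative-frequency vector of the first `n` terms of `ω`. -/
def relFreq {Ω : Type*} [Fintype Ω] [DecidableEq Ω] (ω : ℕ → Ω) (n : ℕ) :
    EuclideanSpace ℝ Ω :=
  WithLp.toLp 2 (fun x => (((Finset.range n).filter fun i => ω i = x).card : ℝ) / n)

/-- The set of cluster points of a sequence in a topological space. -/
def clusterPts {X : Type*} [TopologicalSpace X] (a : ℕ → X) : Set X :=
  {c | MapClusterPt c atTop a}

/-- Cesàro averages of a sequence of vectors. -/
def cesaro {Ω : Type*} [Fintype Ω] (m : ℕ → EuclideanSpace ℝ Ω) (n : ℕ) :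
    EuclideanSpace ℝ Ω :=
  (n : ℝ)⁻¹ • ∑ i ∈ Finset.range n, m i

/-- `μ` is the infinite (Ionescu-Tulcea) independent product of the probability vectors `m i`,
characterized by its values on cylinder sets. -/
def IsIT {Ω : Type*} [Fintype Ω] [MeasurableSpace Ω] (m : ℕ → EuclideanSpace ℝ Ω)
    (μ : Measure (ℕ → Ω)) : Prop :=
  ∀ (n : ℕ) (x : Fin n → Ω),
    μ {ω | ∀ i : Fin n, ω (i : ℕ) = x i} = ∏ i : Fin n, ENNReal.ofReal (m i.val (x i))

end

lemma probVec_norm_le (k : ℕ) (p : EuclideanSpace ℝ (Fin k)) (h0 : ∀ x, 0 ≤ p x)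
    (h1 : ∑ x, p x = 1) : ‖p‖ ≤ 1 := by
  rw [EuclideanSpace.norm_eq, show (1:ℝ) = √1 by simp]
  apply Real.sqrt_le_sqrt
  calc ∑ x, ‖p x‖ ^ 2 = ∑ x, (p x) ^ 2 := by
        simp [Real.norm_eq_abs, sq_abs]
    _ ≤ (∑ x, p x) ^ 2 := Finset.sum_sq_le_sq_sum_of_nonneg (fun i _ => h0 i)
    _ = 1 := by rw [h1]; norm_num


/-- **Approximation lemma.** Any point of the convex hull of `M ⊆ Δ^k` can be
approximated to within `4(k+1)/v` in Euclidean norm by the average of `v` points of `M`. -/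
theorem stmt17 (k : ℕ) (hk : 1 < k)
    (M : Set (EuclideanSpace ℝ (Fin k))) (hM : M.Nonempty) (hMsub : M ⊆ probVec (Fin k))
    (q : EuclideanSpace ℝ (Fin k)) (hq : q ∈ convexHull ℝ M)
    (v : ℕ) (hv : 1 ≤ v) :
    ∃ b : Fin v → EuclideanSpace ℝ (Fin k), (∀ i, b i ∈ M) ∧
      ‖q - (v : ℝ)⁻¹ • ∑ i, b i‖ ≤ 4 * ((k : ℝ) + 1) / v := by
  classical
  rw [convexHull_eq_union] at hq
  simp only [Set.mem_iUnion, exists_prop] at hq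
  obtain ⟨t, hts, hai, hqt⟩ := hq
  have hv0 : (0:ℝ) < v := by exact_mod_cast hv
  -- cardinality bound from Carathéodory
  have hcard : t.card ≤ k + 1 := by
    have h1 := hai.card_le_finrank_succ
    rw [Fintype.card_coe] at h1
    refine h1.trans ?_
    have h2 := Submodule.finrank_le
      (vectorSpan ℝ (Set.range ((↑) : t → EuclideanSpace ℝ (Fin k))))
    rw [finrank_euclideanSpace_fin] at h2
    omega
  -- weights
  rw [Finset.convexHull_eq] at hqt
  obtain ⟨w, hw0, hw1, hwq⟩ := hqt
  rw [Finset.centerMass_eq_of_sum_1 _ _ hw1] at hwq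
  simp only [id] at hwq
  have ht0 : t.Nonempty := by
    rcases Finset.eq_empty_or_nonempty t with h | h
    · rw [h] at hw1; simp at hw1
    · exact h
  obtain ⟨j0, hj0⟩ := ht0
  set S : ℕ := ∑ y ∈ t, ⌊(v:ℝ) * w y⌋₊ with hS
  have hSle : S ≤ v := by
    have : (S:ℝ) ≤ v := by
      rw [hS]
      push_cast
      calc ∑ y ∈ t, ((⌊(v:ℝ) * w y⌋₊ : ℝ)) ≤ ∑ y ∈ t, (v:ℝ) * w y :=
            Finset.sum_le_sum fun y hy => Nat.floor_le (mul_nonneg hv0.le (hw0 y hy))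
        _ = v := by rw [← Finset.mul_sum, hw1, mul_one]
    exact_mod_cast this
  set d : ℕ := v - S with hdd
  have hdle : (d:ℝ) ≤ t.card := by
    have hlt : (v:ℝ) < S + t.card := by
      calc (v:ℝ) = ∑ y ∈ t, (v:ℝ) * w y := by rw [← Finset.mul_sum, hw1, mul_one]
        _ < ∑ y ∈ t, ((⌊(v:ℝ) * w y⌋₊ : ℝ) + 1) :=
            Finset.sum_lt_sum_of_nonempty ⟨j0, hj0⟩ fun y hy => Nat.lt_floor_add_one _
        _ = S + t.card := by
            rw [Finset.sum_add_distrib]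
            push_cast [hS]
            simp
    have : (d:ℝ) = (v:ℝ) - S := by rw [hdd]; push_cast [Nat.cast_sub hSle]; ring
    rw [this]; linarith
  set n : EuclideanSpace ℝ (Fin k) → ℕ :=
    fun y => ⌊(v:ℝ) * w y⌋₊ + (if y = j0 then d else 0) with hn
  have hnsum : ∑ y ∈ t, n y = v := by
    rw [hn]
    rw [Finset.sum_add_distrib, Finset.sum_ite_eq' t j0 fun _ => d, if_pos hj0]
    omega
  -- the multiset of chosen points
  set mlt : Multiset (EuclideanSpace ℝ (Fin k)) :=
    t.val.bind (fun y => Multiset.replicate (n y) y) with hmlt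
  have hcardm : Multiset.card mlt = v := by
    rw [hmlt, Multiset.card_bind, ← hnsum]
    simp only [Function.comp, Multiset.card_replicate]
    rfl
  set l := mlt.toList with hl
  have hlen : l.length = v := by rw [hl, Multiset.length_toList, hcardm]
  refine ⟨fun i => l.get (Fin.cast hlen.symm i), ?_, ?_⟩
  · intro i
    show l.get (Fin.cast hlen.symm i) ∈ M
    apply hts
    have hmem : l.get (Fin.cast hlen.symm i) ∈ mlt := by
      rw [← Multiset.mem_toList]
      exact l.get_mem _
    obtain ⟨y, hy, hmem'⟩ := Multiset.mem_bind.1 (by rwa [hmlt] at hmem)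
    rw [Multiset.eq_of_mem_replicate hmem']
    exact hy
  · have hsum : ∑ i : Fin v, l.get (Fin.cast hlen.symm i) = ∑ y ∈ t, (n y) • y := by
      have h1 : ∑ i : Fin v, l.get (Fin.cast hlen.symm i) = ∑ i : Fin l.length, l.get i :=
        Fintype.sum_equiv (finCongr hlen.symm) _ _ (fun i => rfl)
      rw [h1]
      have h2 : ∑ i : Fin l.length, l.get i = l.sum := by
        conv_rhs => rw [← List.ofFn_get l]
        rw [List.sum_ofFn]
      rw [h2, hl, Multiset.sum_toList, hmlt, Multiset.sum_bind]
      simp only [Multiset.sum_replicate]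
      rfl
    rw [hsum]
    have key : q - (v:ℝ)⁻¹ • ∑ y ∈ t, (n y) • y
        = ∑ y ∈ t, (w y - (n y : ℝ)/v) • y := by
      rw [← hwq, Finset.smul_sum, ← Finset.sum_sub_distrib]
      refine Finset.sum_congr rfl fun y hy => ?_
      rw [sub_smul]
      congr 1
      rw [← Nat.cast_smul_eq_nsmul ℝ, smul_smul, div_eq_inv_mul]
    rw [key]
    -- norm estimates
    have hnorm1 : ∀ y ∈ t, ‖y‖ ≤ 1 := fun y hy => by
      obtain ⟨h0, h1⟩ := hMsub (hts hy)
      exact probVec_norm_le k y h0 h1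
    have hfloor : ∀ y ∈ t, |w y - (⌊(v:ℝ) * w y⌋₊ : ℝ)/v| ≤ 1/v := by
      intro y hy
      have h1 : (⌊(v:ℝ) * w y⌋₊ : ℝ) ≤ v * w y := Nat.floor_le (mul_nonneg hv0.le (hw0 y hy))
      have h2 : (v:ℝ) * w y < ⌊(v:ℝ) * w y⌋₊ + 1 := Nat.lt_floor_add_one _
      have he : w y - (⌊(v:ℝ) * w y⌋₊ : ℝ)/v = ((v:ℝ) * w y - ⌊(v:ℝ) * w y⌋₊)/v := by
        field_simp
      rw [he, abs_div, abs_of_pos hv0]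
      gcongr
      rw [abs_le]
      constructor <;> linarith
    calc ‖∑ y ∈ t, (w y - (n y:ℝ)/v) • y‖
        ≤ ∑ y ∈ t, ‖(w y - (n y:ℝ)/v) • y‖ := norm_sum_le _ _
      _ = ∑ y ∈ t, |w y - (n y:ℝ)/v| * ‖y‖ := by
          simp [norm_smul, Real.norm_eq_abs]
      _ ≤ ∑ y ∈ t, |w y - (n y:ℝ)/v| * 1 := by
          refine Finset.sum_le_sum fun y hy => ?_
          exact mul_le_mul_of_nonneg_left (hnorm1 y hy) (abs_nonneg _)
      _ = ∑ y ∈ t.erase j0, |w y - (n y:ℝ)/v| + |w j0 - (n j0:ℝ)/v| := by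
          simp only [mul_one]
          rw [Finset.sum_erase_add t _ hj0]
      _ ≤ (k+1) * (1/v) + ((k:ℝ)+2)/v := by
          gcongr
          · calc ∑ y ∈ t.erase j0, |w y - (n y:ℝ)/v|
                ≤ ∑ _y ∈ t.erase j0, 1/(v:ℝ) := by
                  refine Finset.sum_le_sum fun y hy => ?_
                  have hy' : y ≠ j0 := Finset.ne_of_mem_erase hy
                  have : n y = ⌊(v:ℝ) * w y⌋₊ := by rw [hn]; simp [hy']
                  rw [this]
                  exact hfloor y (Finset.mem_of_mem_erase hy)
              _ = (t.erase j0).card * (1/v) := by rw [Finset.sum_const, nsmul_eq_mul]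
              _ ≤ ((k:ℝ)+1) * (1/v) := by
                  gcongr
                  have h3 : (t.erase j0).card ≤ t.card := Finset.card_erase_le
                  have : ((t.erase j0).card : ℝ) ≤ t.card := by exact_mod_cast h3
                  have h4 : (t.card : ℝ) ≤ k + 1 := by exact_mod_cast hcard
                  linarith
          · have hnj0 : (n j0 : ℝ) = (⌊(v:ℝ) * w j0⌋₊ : ℝ) + d := by
              rw [hn]; simp
            have h5 := hfloor j0 hj0
            have h6 : |w j0 - (n j0:ℝ)/v| ≤ |w j0 - (⌊(v:ℝ) * w j0⌋₊ : ℝ)/v| + d/v := by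
              rw [hnj0]
              have : w j0 - ((⌊(v:ℝ) * w j0⌋₊ : ℝ) + d)/v
                  = (w j0 - (⌊(v:ℝ) * w j0⌋₊ : ℝ)/v) - d/v := by ring
              rw [this]
              calc |(w j0 - (⌊(v:ℝ) * w j0⌋₊ : ℝ)/v) - (d:ℝ)/v|
                  ≤ |w j0 - (⌊(v:ℝ) * w j0⌋₊ : ℝ)/v| + |(d:ℝ)/v| := abs_sub _ _
                _ = |w j0 - (⌊(v:ℝ) * w j0⌋₊ : ℝ)/v| + d/v := by
                    rw [abs_div, abs_of_nonneg (by positivity : (0:ℝ) ≤ (d:ℝ)),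
                      abs_of_pos hv0]
            have h7 : (d:ℝ)/v ≤ ((k:ℝ)+1)/v := by
              gcongr
              have h4 : (t.card : ℝ) ≤ k + 1 := by exact_mod_cast hcard
              linarith
            calc |w j0 - (n j0:ℝ)/v| ≤ 1/v + (d:ℝ)/v := by linarith
              _ ≤ 1/v + ((k:ℝ)+1)/v := by linarith
              _ = ((k:ℝ)+2)/v := by ring
      _ ≤ 4 * ((k : ℝ) + 1) / v := by
          have he : ((k:ℝ)+1) * (1/v) + ((k:ℝ)+2)/v = (2*(k:ℝ)+3)/v := by ring
          rw [he]
          gcongr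
          have : (0:ℝ) ≤ (k:ℝ) := Nat.cast_nonneg k
          linarith
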